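/- arXiv:1506.03413 — 3 statements merged into one kernel-verified Lean document; each statement's English description precedes it below -/
import Mathlib

section
/- For every ω ∈ Ω and t ∈ ℝ₊, the set Ā_{ω,t} := {(ω',θ') ∈ Ω̄ : ω'_{t∧·} = ω_{t∧·} and θ' > t} is an atom of the σ-field F̄_t: for every C ∈ F̄_t, either Ā_{ω,t} ⊆ C or Ā_{ω,t} ∩ C = ∅. -/
open MeasureTheory MeasurableSpace
open scoped NNReal

/-- Paths on `ℝ₊`. -/
abbrev RPath : Type := ℝ≥0 → ℝ

/-- The enlarged space `Ω̄ = Ω × ℝ₊`, with canonical process `B(ω,θ) = ω`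
and `T(ω,θ) = θ`. -/
abbrev OmegaBar : Type := RPath × ℝ≥0

/-- The enlarged canonical filtration `F̄_t = σ(B_u, u ≤ t) ∨ σ({T ≤ u}, u ≤ t)`. -/
def Fbar (t : ℝ≥0) : MeasurableSpace OmegaBar :=
  (⨆ u ∈ Set.Iic t, MeasurableSpace.comap (fun x : OmegaBar => x.1 u)
      (inferInstance : MeasurableSpace ℝ)) ⊔
    MeasurableSpace.generateFrom {A | ∃ u ≤ t, A = {x : OmegaBar | x.2 ≤ u}}

/-- for `ω ∈ Ω` and `t ∈ ℝ₊`, the set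
`Ā_{ω,t} = {(ω',θ') : ω'_{t∧·} = ω_{t∧·}, θ' > t}` is an atom of `F̄_t`:
every `C ∈ F̄_t` either contains `Ā_{ω,t}` or is disjoint from it. -/
theorem Abar_atom (ω : RPath) (hω : Continuous ω) (hω0 : ω 0 = 0) (t : ℝ≥0)
    (C : Set OmegaBar) (hC : MeasurableSet[Fbar t] C) :
    {y : OmegaBar | (∀ s ≤ t, y.1 s = ω s) ∧ t < y.2} ⊆ C ∨
      {y : OmegaBar | (∀ s ≤ t, y.1 s = ω s) ∧ t < y.2} ∩ C = ∅ := by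
  set A := {y : OmegaBar | (∀ s ≤ t, y.1 s = ω s) ∧ t < y.2} with hA
  let m : MeasurableSpace OmegaBar :=
  { MeasurableSet' := fun S => ∀ y ∈ A, ∀ y' ∈ A, (y ∈ S ↔ y' ∈ S)
    measurableSet_empty := by intro y _ y' _; simp
    measurableSet_compl := by
      intro S hS y hy y' hy'
      simp only [Set.mem_compl_iff]
      exact not_congr (hS y hy y' hy')
    measurableSet_iUnion := by
      intro f hf y hy y' hy'
      simp only [Set.mem_iUnion]
      exact exists_congr fun i => hf i y hy y' hy' }
  have hle : Fbar t ≤ m := by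
    rw [Fbar]
    apply sup_le
    · apply iSup_le; intro u; apply iSup_le; intro hu
      intro S hS
      obtain ⟨B, -, rfl⟩ := hS
      intro y hy y' hy'
      simp only [Set.mem_preimage]
      rw [show y.1 u = y'.1 u from (hy.1 u hu).trans (hy'.1 u hu).symm]
    · rw [MeasurableSpace.generateFrom_le_iff]
      rintro S ⟨u, hu, rfl⟩
      intro y hy y' hy'
      simp only [Set.mem_setOf_eq]
      constructor
      · intro h; exact absurd h (not_le.mpr (lt_of_le_of_lt hu hy.2))
      · intro h; exact absurd h (not_le.mpr (lt_of_le_of_lt hu hy'.2))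
  have key : ∀ y ∈ A, ∀ y' ∈ A, (y ∈ C ↔ y' ∈ C) := hle C hC
  by_cases h : (A ∩ C).Nonempty
  · obtain ⟨y₀, hy₀A, hy₀C⟩ := h
    exact Or.inl fun y hy => (key y hy y₀ hy₀A).mpr hy₀C
  · exact Or.inr (Set.not_nonempty_iff_eq_empty.mp h)
end

section
/- Every F̄-stopping time τ with τ ≤ T is of the form τ(ω,θ) = τ₀(ω) ∧ θ for some stopping time τ₀ of the canonical filtration F on Ω; concretely, τ₀ can be taken as τ₀(ω) := sup_{n ∈ ℕ} τ(ω, n). -/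
open MeasureTheory MeasurableSpace
open scoped NNReal ENNReal

/-- The canonical filtration `F_t = σ(B_u, u ≤ t)` on path space. -/
def Fpath (t : ℝ≥0) : MeasurableSpace RPath :=
  ⨆ u ∈ Set.Iic t, MeasurableSpace.comap (fun ω : RPath => ω u)
    (inferInstance : MeasurableSpace ℝ)

/-- `τ : Ω̄ → ℝ₊` is an `F̄`-stopping time: `{τ ≤ t} ∈ F̄_t` for all `t`. -/
def IsFbarStopping (τ : OmegaBar → ℝ≥0) : Prop :=
  ∀ t : ℝ≥0, MeasurableSet[Fbar t] {x : OmegaBar | τ x ≤ t}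

/-- `σ : Ω → [0,∞]` is an `F`-stopping time on path space. -/
def IsFStopping (σ : RPath → ℝ≥0∞) : Prop :=
  ∀ t : ℝ≥0, MeasurableSet[Fpath t] {ω : RPath | σ ω ≤ t}

lemma fbar_le (t : ℝ≥0) (m : MeasurableSpace OmegaBar)
    (h1 : ∀ u ≤ t, ∀ E : Set ℝ, MeasurableSet E →
      MeasurableSet[m] ((fun x : OmegaBar => x.1 u) ⁻¹' E))
    (h2 : ∀ u ≤ t, MeasurableSet[m] {x : OmegaBar | x.2 ≤ u}) :
    Fbar t ≤ m := by
  apply sup_le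
  · refine iSup₂_le fun u hu => ?_
    intro s hs
    obtain ⟨E, hE, rfl⟩ := hs
    exact h1 u hu E hE
  · refine MeasurableSpace.generateFrom_le ?_
    rintro A ⟨u, hu, rfl⟩
    exact h2 u hu

lemma fpath_eval_mem {t u : ℝ≥0} (hu : u ≤ t) {E : Set ℝ} (hE : MeasurableSet E) :
    MeasurableSet[Fpath t] ((fun ω : RPath => ω u) ⁻¹' E) := by
  have h : MeasurableSpace.comap (fun ω : RPath => ω u)
      (inferInstance : MeasurableSpace ℝ) ≤ Fpath t :=
    le_iSup₂ (f := fun u (_ : u ∈ Set.Iic t) => MeasurableSpace.comap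
      (fun ω : RPath => ω u) (inferInstance : MeasurableSpace ℝ)) u hu
  exact h _ ⟨E, hE, rfl⟩

lemma iota_measurable (t θ : ℝ≥0) {s : Set OmegaBar} (hs : MeasurableSet[Fbar t] s) :
    MeasurableSet[Fpath t] ((fun ω : RPath => (ω, θ)) ⁻¹' s) := by
  refine fbar_le t (MeasurableSpace.map (fun ω : RPath => (ω, θ)) (Fpath t))
    (fun u hu E hE => fpath_eval_mem hu hE) (fun u hu => ?_) s hs
  show MeasurableSet[Fpath t] ((fun ω : RPath => (ω, θ)) ⁻¹' {x : OmegaBar | x.2 ≤ u})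
  rcases le_or_gt θ u with h | h
  · have : ((fun ω : RPath => (ω, θ)) ⁻¹' {x : OmegaBar | x.2 ≤ u}) = Set.univ := by
      ext ω; simp [h]
    rw [this]; exact @MeasurableSet.univ _ (Fpath t)
  · have : ((fun ω : RPath => (ω, θ)) ⁻¹' {x : OmegaBar | x.2 ≤ u}) = ∅ := by
      ext ω; simp [not_le.2 h]
    rw [this]; exact @MeasurableSet.empty _ (Fpath t)

lemma section_const (t : ℝ≥0) {s : Set OmegaBar} (hs : MeasurableSet[Fbar t] s)
    {θ₁ θ₂ : ℝ≥0} (h1 : t < θ₁) (h2 : t < θ₂) (ω : RPath) :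
    (ω, θ₁) ∈ s ↔ (ω, θ₂) ∈ s := by
  let m : MeasurableSpace OmegaBar :=
  { MeasurableSet' := fun s => ∀ ω : RPath, ((ω, θ₁) ∈ s ↔ (ω, θ₂) ∈ s)
    measurableSet_empty := fun ω => Iff.rfl
    measurableSet_compl := fun s hs ω => not_congr (hs ω)
    measurableSet_iUnion := fun f hf ω => by
      simp only [Set.mem_iUnion]; exact exists_congr fun i => hf i ω }
  have hle : Fbar t ≤ m := by
    refine fbar_le t m (fun u hu E hE ω => Iff.rfl) (fun u hu ω => ?_)
    exact iff_of_false (fun h => absurd (h.trans hu) (not_le.2 h1))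
      (fun h => absurd (h.trans hu) (not_le.2 h2))
  exact hle s hs ω

lemma tau_mono (τ : OmegaBar → ℝ≥0) (hτ : IsFbarStopping τ)
    (hτT : ∀ x : OmegaBar, τ x ≤ x.2) (ω : RPath) {θ θ' : ℝ≥0} (h : θ ≤ θ') :
    τ (ω, θ) ≤ τ (ω, θ') := by
  set t := τ (ω, θ') with ht
  rcases lt_or_ge t θ with hlt | hle
  · exact (section_const t (hτ t) hlt (hlt.trans_le h) ω).2 (show τ (ω, θ') ≤ t from le_rfl)
  · exact (hτT (ω, θ)).trans hle

/-- every `F̄`-stopping time `τ ≤ T` has the form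
`τ(ω,θ) = τ₀(ω) ∧ θ`, with `τ₀(ω) := sup_{n ∈ ℕ} τ(ω, n)` an `F`-stopping time. -/
theorem stoppingTime_representation (τ : OmegaBar → ℝ≥0)
    (hτ : IsFbarStopping τ) (hτT : ∀ x : OmegaBar, τ x ≤ x.2) :
    IsFStopping (fun ω => ⨆ n : ℕ, (τ (ω, n) : ℝ≥0∞)) ∧
      ∀ x : OmegaBar, (τ x : ℝ≥0∞) = min (⨆ n : ℕ, (τ (x.1, n) : ℝ≥0∞)) (x.2 : ℝ≥0∞) := by
  constructor
  · intro t
    have : {ω : RPath | (⨆ n : ℕ, (τ (ω, n) : ℝ≥0∞)) ≤ t}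
        = ⋂ n : ℕ, (fun ω : RPath => (ω, (n : ℝ≥0))) ⁻¹' {x : OmegaBar | τ x ≤ t} := by
      ext ω
      simp only [Set.mem_setOf_eq, iSup_le_iff, Set.mem_iInter, Set.mem_preimage,
        ENNReal.coe_le_coe]
    rw [this]
    apply MeasurableSet.iInter
    exact fun n => iota_measurable t (n : ℝ≥0) (hτ t)
  · rintro ⟨ω, θ⟩
    apply le_antisymm
    · refine le_min ?_ (ENNReal.coe_le_coe.2 (hτT (ω, θ)))
      refine le_trans ?_ (le_iSup (fun n : ℕ => (τ (ω, (n : ℝ≥0)) : ℝ≥0∞)) ⌈θ⌉₊)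
      exact ENNReal.coe_le_coe.2 (tau_mono τ hτ hτT ω (by exact_mod_cast Nat.le_ceil θ))
    · set t := τ (ω, θ) with htdef
      rcases eq_or_lt_of_le (hτT (ω, θ)) with heq | hlt
    -- heq : t = θ
      · exact min_le_of_right_le (by exact_mod_cast le_of_eq heq.symm)
      · refine min_le_of_left_le (iSup_le fun n => ENNReal.coe_le_coe.2 ?_)
        rcases le_or_gt (n : ℝ≥0) t with hn | hn
        · exact (hτT (ω, n)).trans hn
        · exact (section_const t (hτ t) hlt hn ω).1 (show τ (ω, θ) ≤ t from le_rfl)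
end

section
/- If τ(ω̄) < θ for some ω̄ = (ω,θ) ∈ Ω̄ and τ is an F̄-stopping time, then τ(ω, θ') = τ(ω, θ) for all θ' > θ. -/
open MeasureTheory MeasurableSpace
open scoped NNReal

/-- Sets in `F̄_t` cannot distinguish `(ω,θ)` from `(ω,θ')` when `θ, θ' > t`. -/
lemma fbar_indep (t : ℝ≥0) (ω : RPath) (θ θ' : ℝ≥0) (hθ : t < θ) (hθ' : t < θ')
    (A : Set OmegaBar) (hA : MeasurableSet[Fbar t] A) :
    (ω, θ) ∈ A ↔ (ω, θ') ∈ A := by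
  let m' : MeasurableSpace OmegaBar :=
    { MeasurableSet' := fun A => ((ω, θ) ∈ A ↔ (ω, θ') ∈ A)
      measurableSet_empty := Iff.rfl
      measurableSet_compl := fun s hs => not_congr hs
      measurableSet_iUnion := fun f hf => by
        simp only [Set.mem_iUnion]; exact exists_congr hf }
  have hle : Fbar t ≤ m' := by
    apply sup_le
    · refine iSup_le fun u => iSup_le fun hu s hs => ?_
      obtain ⟨s', _, rfl⟩ := hs
      exact Iff.rfl
    · refine MeasurableSpace.generateFrom_le ?_
      rintro s ⟨u, hu, rfl⟩
      exact iff_of_false (fun h : θ ≤ u => absurd (h.trans hu) hθ.not_ge)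
        (fun h : θ' ≤ u => absurd (h.trans hu) hθ'.not_ge)
  exact hle A hA

/-- if `τ` is an `F̄`-stopping time and `τ(ω,θ) < θ`, then
`τ(ω,θ') = τ(ω,θ)` for all `θ' > θ`. -/
theorem stoppingTime_constant_after (τ : OmegaBar → ℝ≥0) (hτ : IsFbarStopping τ)
    (ω : RPath) (θ : ℝ≥0) (h : τ (ω, θ) < θ) :
    ∀ θ' : ℝ≥0, θ < θ' → τ (ω, θ') = τ (ω, θ) := by
  intro θ' hθ'
  have h1 : τ (ω, θ') ≤ τ (ω, θ) :=
    (fbar_indep (τ (ω, θ)) ω θ θ' h (h.trans hθ') _ (hτ _)).mp (show τ (ω, θ) ≤ τ (ω, θ) from le_rfl)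
  have h2 : τ (ω, θ) ≤ τ (ω, θ') :=
    (fbar_indep (τ (ω, θ')) ω θ' θ ((h1.trans_lt h).trans hθ') (h1.trans_lt h)
      _ (hτ _)).mp (show τ (ω, θ') ≤ τ (ω, θ') from le_rfl)
  exact le_antisymm h1 h2
end
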